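/- arXiv:2104.10023 — 2 statements merged into one kernel-verified Lean document; each statement's English description precedes it below -/
import Mathlib

section
/- For every prime p with p ≡ 3 (mod 4) and every integer n with gcd(n,p) = 1, one has the exact identity Σ_{χ mod p} |G(n,χ;p)|⁶ = (p−1)(10p³ − 25p² − 4p − 1), where the sum is over all Dirichlet characters χ modulo p (including the principal character). -/
/-- The generalized quadratic Gauss sum `G(n,χ;p) = Σ_{a=1}^{p} χ(a)·e^{2πi·n·a²/p}`. -/
noncomputable def gaussG (n : ℤ) (p : ℕ) (χ : DirichletCharacter ℂ p) : ℂ :=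
  ∑ a ∈ Finset.Icc 1 p, χ a * Complex.exp (2 * Real.pi * Complex.I * n * (a : ℂ) ^ 2 / p)

open Finset

namespace S6

variable (p : ℕ) [Fact p.Prime]

noncomputable def φC : MulChar (ZMod p) ℂ :=
  (quadraticChar (ZMod p)).ringHomComp (Int.castRingHom ℂ)

noncomputable def gC : ℂ := gaussSum (φC p) (ZMod.stdAddChar (N := p))

variable {p}

lemma hchar (hp : p % 4 = 3) : ringChar (ZMod p) ≠ 2 := by
  rw [ZMod.ringChar_zmod_n]
  omega

lemma φC_apply (a : ZMod p) : φC p a = (quadraticChar (ZMod p) a : ℂ) := rfl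

lemma φC_sq_one (hp : p % 4 = 3) {a : ZMod p} (ha : a ≠ 0) : φC p a ^ 2 = 1 := by
  rw [φC_apply, ← Int.cast_pow, quadraticChar_sq_one ha, Int.cast_one]

lemma φC_neg_one (hp : p % 4 = 3) : φC p (-1) = -1 := by
  rw [φC_apply, quadraticChar_neg_one (hchar hp)]
  rw [ZMod.card, ZMod.χ₄_nat_eq_if_mod_four]
  have : ¬ p % 2 = 0 := by omega
  simp [hp, this]

lemma φC_ne_one (hp : p % 4 = 3) : φC p ≠ 1 := by
  rw [φC, MulChar.ringHomComp_ne_one_iff (by exact_mod_cast Int.cast_injective)]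
  exact quadraticChar_ne_one (hchar hp)

lemma gC_sq (hp : p % 4 = 3) : gC p ^ 2 = -(p : ℂ) := by
  have hq : (φC p).IsQuadratic := (quadraticChar_isQuadratic (ZMod p)).comp _
  have := gaussSum_sq (φC_ne_one hp) hq (ZMod.isPrimitive_stdAddChar p)
  have h2 : gC p ^ 2 = φC p (-1) * (Fintype.card (ZMod p) : ℂ) := this
  rw [h2, φC_neg_one hp, ZMod.card]
  ring


lemma sum_K_eq {M : Type*} [AddCommMonoid M] (f : ZMod p → M) :
    ∑ x : ZMod p, f x = f 0 + ∑ u : (ZMod p)ˣ, f ↑u := by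
  classical
  rw [Fintype.sum_eq_add_sum_compl 0 f]
  congr 1
  have hmap : (Finset.univ.map ⟨(Units.val : (ZMod p)ˣ → ZMod p), fun _ _ => Units.ext⟩) = ({0}ᶜ : Finset (ZMod p)) := by
    ext x
    simp only [Finset.mem_map, Finset.mem_univ, true_and, Function.Embedding.coeFn_mk,
      Finset.mem_compl, Finset.mem_singleton]
    constructor
    · rintro ⟨u, rfl⟩; exact u.ne_zero
    · intro hx; exact ⟨Units.mk0 x hx, rfl⟩
  rw [← hmap, Finset.sum_map]
  rfl

lemma sum_units_of_zero {M : Type*} [AddCommMonoid M] {f : ZMod p → M} (hf : f 0 = 0) :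
    ∑ u : (ZMod p)ˣ, f ↑u = ∑ x : ZMod p, f x := by
  rw [sum_K_eq f, hf, zero_add]

lemma card_units' : (Fintype.card (ZMod p)ˣ : ℂ) = (p : ℂ) - 1 := by
  have := ZMod.card_units_eq_totient p
  rw [this, Nat.totient_prime (Fact.out : p.Prime)]
  have h1 : 1 ≤ p := (Fact.out : p.Prime).one_lt.le
  push_cast [Nat.cast_sub h1]
  ring

lemma e_sum_zero {t : ZMod p} (ht : t ≠ 0) :
    ∑ x : ZMod p, ZMod.stdAddChar (t * x) = 0 := by
  have := AddChar.sum_eq_zero_of_ne_one (R' := ℂ) (ZMod.isPrimitive_stdAddChar p ht)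
  simpa using this

lemma sum_φ_mul (hp : p % 4 = 3) {t : ZMod p} (ht : t ≠ 0) :
    ∑ x : ZMod p, φC p x * ZMod.stdAddChar (t * x) = φC p t * gC p := by
  have key := gaussSum_mulShift (φC p) (ZMod.stdAddChar (N := p)) (Units.mk0 t ht)
  have h1 : gaussSum (φC p) ((ZMod.stdAddChar (N := p)).mulShift (Units.mk0 t ht)) =
      ∑ x : ZMod p, φC p x * ZMod.stdAddChar (t * x) := by
    unfold gaussSum
    simp [AddChar.mulShift_apply]
  rw [h1] at key
  have hcoe : ((Units.mk0 t ht : (ZMod p)ˣ) : ZMod p) = t := rfl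
  rw [hcoe] at key
  have h3 : φC p t * φC p t = 1 := by
    have := φC_sq_one hp ht
    rwa [sq] at this
  calc ∑ x : ZMod p, φC p x * ZMod.stdAddChar (t * x)
      = (φC p t * φC p t) * ∑ x : ZMod p, φC p x * ZMod.stdAddChar (t * x) := by rw [h3, one_mul]
    _ = φC p t * gC p := by rw [mul_assoc, key]; rfl

lemma sum_sq_expand (hp : p % 4 = 3) (F : ZMod p → ℂ) :
    ∑ x : ZMod p, F (x ^ 2) = ∑ a : ZMod p, (1 + φC p a) * F a := by
  classical
  have := Finset.sum_fiberwise (s := Finset.univ) (g := fun x : ZMod p => x ^ 2)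
    (f := fun x : ZMod p => F (x ^ 2))
  rw [← this]
  refine Finset.sum_congr rfl fun a _ => ?_
  have hcard : ((Finset.univ.filter (fun x : ZMod p => x ^ 2 = a)).card : ℂ)
      = 1 + φC p a := by
    have hq := quadraticChar_card_sqrts (hchar hp) a
    have hset : {x : ZMod p | x ^ 2 = a}.toFinset
        = Finset.univ.filter (fun x : ZMod p => x ^ 2 = a) := by
      ext x; simp
    rw [hset] at hq
    have : ((Finset.univ.filter (fun x : ZMod p => x ^ 2 = a)).card : ℤ)
        = quadraticChar (ZMod p) a + 1 := hq
    calc ((Finset.univ.filter (fun x : ZMod p => x ^ 2 = a)).card : ℂ)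
        = ((((Finset.univ.filter (fun x : ZMod p => x ^ 2 = a)).card : ℤ)) : ℂ) := by push_cast; ring
      _ = ((quadraticChar (ZMod p) a + 1 : ℤ) : ℂ) := by rw [this]
      _ = 1 + φC p a := by rw [φC_apply]; push_cast; ring
  calc ∑ x ∈ Finset.univ.filter (fun x : ZMod p => x ^ 2 = a), F (x ^ 2)
      = ∑ x ∈ Finset.univ.filter (fun x : ZMod p => x ^ 2 = a), F a := by
        refine Finset.sum_congr rfl fun x hx => ?_
        rw [(Finset.mem_filter.mp hx).2]
    _ = ((Finset.univ.filter (fun x : ZMod p => x ^ 2 = a)).card : ℂ) * F a := by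
        rw [Finset.sum_const, nsmul_eq_mul]
    _ = (1 + φC p a) * F a := by rw [hcard]


variable (p) in
noncomputable def Fn (m w : ZMod p) : ℂ :=
  ∑ d : (ZMod p)ˣ, ZMod.stdAddChar (m * w * (d : ZMod p) ^ 2)

lemma Fn_zero (m : ZMod p) : Fn p m 0 = (p : ℂ) - 1 := by
  rw [Fn]
  have : ∀ d : (ZMod p)ˣ, ZMod.stdAddChar (m * 0 * (d : ZMod p) ^ 2) = 1 := by
    intro d; rw [mul_zero, zero_mul, AddChar.map_zero_eq_one]
  rw [Finset.sum_congr rfl fun d _ => this d, Finset.sum_const, Finset.card_univ, nsmul_eq_mul,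
    mul_one, card_units']

lemma Fn_ne_zero (hp : p % 4 = 3) {m w : ZMod p} (hm : m ≠ 0) (hw : w ≠ 0) :
    Fn p m w = φC p (m * w) * gC p - 1 := by
  have ht : m * w ≠ 0 := mul_ne_zero hm hw
  have h0 : (∑ x : ZMod p, ZMod.stdAddChar (m * w * x ^ 2))
      = 1 + Fn p m w := by
    rw [sum_K_eq (f := fun x : ZMod p => ZMod.stdAddChar (m * w * x ^ 2))]
    congr 1
    rw [mul_comm (m*w) _]
    norm_num
  have h1 : (∑ x : ZMod p, ZMod.stdAddChar (m * w * x ^ 2))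
      = φC p (m * w) * gC p := by
    rw [sum_sq_expand hp (F := fun a : ZMod p => ZMod.stdAddChar (m * w * a))]
    have : ∀ a : ZMod p, (1 + φC p a) * ZMod.stdAddChar (m * w * a)
        = ZMod.stdAddChar (m * w * a) + φC p a * ZMod.stdAddChar (m * w * a) := fun a => by ring
    rw [Finset.sum_congr rfl fun a _ => this a, Finset.sum_add_distrib,
      e_sum_zero ht, sum_φ_mul hp ht, zero_add]
  rw [h0] at h1
  linear_combination h1

variable (p) in
noncomputable def hh (x : (ZMod p)ˣ) : ℂ := φC p ((x : ZMod p) ^ 2 - 1)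

variable (p) in
noncomputable def dd (x : (ZMod p)ˣ) : ℂ := if (x : ZMod p) ^ 2 = 1 then 1 else 0

lemma two_lt (hp : p % 4 = 3) : 2 < p := by
  rcases Nat.lt_or_ge 2 p with h | h
  · exact h
  · interval_cases p <;> omega

lemma neg_one_ne_one' (hp : p % 4 = 3) : (-1 : (ZMod p)ˣ) ≠ 1 := by
  intro h
  have h2 : ((-1 : (ZMod p)ˣ) : ZMod p) = ((1 : (ZMod p)ˣ) : ZMod p) := by rw [h]
  rw [Units.val_neg, Units.val_one] at h2
  have : Fact (2 < p) := ⟨by omega⟩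
  exact ZMod.neg_one_ne_one h2

lemma sq_one_iff (x : (ZMod p)ˣ) : (x : ZMod p) ^ 2 = 1 ↔ x = 1 ∨ x = -1 := by
  rw [sq, mul_self_eq_one_iff]
  constructor
  · rintro (h | h)
    · left; exact Units.ext h
    · right; apply Units.ext; rw [Units.val_neg, Units.val_one]; exact h
  · rintro (rfl | rfl)
    · left; rfl
    · right; rw [Units.val_neg, Units.val_one]

lemma sum_dd (hp : p % 4 = 3) (f : (ZMod p)ˣ → ℂ) :
    ∑ x : (ZMod p)ˣ, dd p x * f x = f 1 + f (-1) := by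
  classical
  have key : ∀ x : (ZMod p)ˣ, dd p x * f x
      = (if x = 1 then f x else 0) + (if x = -1 then f x else 0) := by
    intro x
    rw [dd]
    by_cases h : (x : ZMod p) ^ 2 = 1
    · rcases (sq_one_iff x).mp h with rfl | rfl
      · rw [if_pos h, if_pos rfl, if_neg (fun hc => neg_one_ne_one' hp hc.symm), one_mul, add_zero]
      · rw [if_pos h, if_pos rfl, if_neg (neg_one_ne_one' hp), one_mul, zero_add]
    · have h1 : x ≠ 1 := fun hc => h (by rw [hc]; simp)
      have h2 : x ≠ -1 := fun hc => h (by rw [hc]; simp [Units.val_neg])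
      rw [if_neg h, if_neg h1, if_neg h2, zero_mul, add_zero]
  rw [Finset.sum_congr rfl fun x _ => key x, Finset.sum_add_distrib]
  simp

lemma φC_zero : φC p (0 : ZMod p) = 0 := by
  rw [φC_apply, MulChar.map_zero, Int.cast_zero]

lemma hh_of_sq_one {x : (ZMod p)ˣ} (h : (x : ZMod p) ^ 2 = 1) : hh p x = 0 := by
  rw [hh, h, sub_self, φC_zero]

lemma hh_neg (x : (ZMod p)ˣ) : hh p (-x) = hh p x := by
  rw [hh, hh, Units.val_neg, neg_sq]

lemma hh_inv (hp : p % 4 = 3) (x : (ZMod p)ˣ) : hh p x⁻¹ = - hh p x := by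
  have hx : (x : ZMod p) ≠ 0 := x.ne_zero
  have hco : ((x⁻¹ : (ZMod p)ˣ) : ZMod p) = (x : ZMod p)⁻¹ := Units.val_inv_eq_inv_val x
  by_cases h : (x : ZMod p) ^ 2 = 1
  · have h2 : ((x⁻¹ : (ZMod p)ˣ) : ZMod p) ^ 2 = 1 := by
      rw [hco, inv_pow, h, inv_one]
    rw [hh_of_sq_one h, hh_of_sq_one h2, neg_zero]
  · have key : ((x : ZMod p)⁻¹) ^ 2 - 1
        = ((x : ZMod p)⁻¹) ^ 2 * (-1) * ((x : ZMod p) ^ 2 - 1) := by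
      field_simp
      ring
    have hxinv : (x : ZMod p)⁻¹ ≠ 0 := inv_ne_zero hx
    have hsq : φC p (((x : ZMod p)⁻¹) ^ 2) = 1 := by
      rw [map_pow, φC_sq_one hp hxinv]
    rw [hh, hh, hco, key, map_mul, map_mul, φC_neg_one hp, hsq]
    ring

lemma hh_sq (hp : p % 4 = 3) (x : (ZMod p)ˣ) : hh p x ^ 2 = 1 - dd p x := by
  by_cases h : (x : ZMod p) ^ 2 = 1
  · rw [hh_of_sq_one h, dd, if_pos h]; ring
  · rw [hh, dd, if_neg h, φC_sq_one hp (sub_ne_zero.mpr h)]; ring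

lemma dd_mul_hh (x : (ZMod p)ˣ) : dd p x * hh p x = 0 := by
  by_cases h : (x : ZMod p) ^ 2 = 1
  · rw [hh_of_sq_one h, mul_zero]
  · rw [dd, if_neg h, zero_mul]

lemma sum_hh (hp : p % 4 = 3) : ∑ x : (ZMod p)ˣ, hh p x = 0 := by
  have h1 : ∑ x : (ZMod p)ˣ, hh p x = ∑ x : (ZMod p)ˣ, hh p x⁻¹ :=
    (Fintype.sum_equiv (Equiv.inv _) _ _ (fun x => rfl)).symm
  have h2 : ∑ x : (ZMod p)ˣ, hh p x⁻¹ = - ∑ x : (ZMod p)ˣ, hh p x := by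
    rw [← Finset.sum_neg_distrib]
    exact Finset.sum_congr rfl fun x _ => hh_inv hp x
  have := h1.trans h2
  linear_combination this / 2

lemma sum_hh_mul_left (hp : p % 4 = 3) (x : (ZMod p)ˣ) :
    ∑ y : (ZMod p)ˣ, hh p (x * y) = 0 :=
  (Fintype.sum_equiv (Equiv.mulLeft x) (fun y => hh p (x * y)) (hh p)
    (fun y => rfl)).trans (sum_hh hp)

lemma sum_T (hp : p % 4 = 3) :
    ∑ x : (ZMod p)ˣ, ∑ y : (ZMod p)ˣ, hh p x * hh p y * hh p (x * y) = 0 := by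
  have h1 : ∀ x : (ZMod p)ˣ, ∀ y : (ZMod p)ˣ,
      hh p x⁻¹ * hh p y⁻¹ * hh p (x⁻¹ * y⁻¹) = -(hh p x * hh p y * hh p (x * y)) := by
    intro x y
    rw [hh_inv hp, hh_inv hp, ← mul_inv, hh_inv hp]
    ring
  have h2 : (∑ x : (ZMod p)ˣ, ∑ y : (ZMod p)ˣ, hh p x * hh p y * hh p (x * y))
      = ∑ x : (ZMod p)ˣ, ∑ y : (ZMod p)ˣ, hh p x⁻¹ * hh p y⁻¹ * hh p (x⁻¹ * y⁻¹) := by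
    refine (Fintype.sum_equiv (Equiv.inv _) _ _ fun x => ?_).symm
    exact Fintype.sum_equiv (Equiv.inv _) _ _ fun y => rfl
  rw [Finset.sum_congr rfl (fun x _ => Finset.sum_congr rfl fun y _ => h1 x y)] at h2
  simp only [Finset.sum_neg_distrib] at h2
  linear_combination h2 / 2


lemma sum_one' : ∑ _x : (ZMod p)ˣ, (1 : ℂ) = (p : ℂ) - 1 := by
  rw [Finset.sum_const, Finset.card_univ, nsmul_eq_mul, mul_one, card_units']

lemma dd_neg (x : (ZMod p)ˣ) : dd p (-x) = dd p x := by
  rw [dd, dd, Units.val_neg, neg_sq]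

lemma dd_sq (x : (ZMod p)ˣ) : dd p x * dd p x = dd p x := by
  rw [dd]; split_ifs <;> ring

lemma sum_dd_one (hp : p % 4 = 3) : ∑ x : (ZMod p)ˣ, dd p x = 2 := by
  have h := sum_dd hp (fun _ => (1 : ℂ))
  simp only [mul_one] at h
  rw [h]; norm_num

lemma sum_hh_sq (hp : p % 4 = 3) : ∑ x : (ZMod p)ˣ, hh p x * hh p x = (p : ℂ) - 3 := by
  have h : ∀ x : (ZMod p)ˣ, hh p x * hh p x = 1 - dd p x := by
    intro x; have := hh_sq hp x; rwa [sq] at this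
  rw [Finset.sum_congr rfl fun x _ => h x, Finset.sum_sub_distrib, sum_one', sum_dd_one hp]
  ring

lemma sum_mul_left_reindex (x : (ZMod p)ˣ) (f : (ZMod p)ˣ → ℂ) :
    ∑ y : (ZMod p)ˣ, f (x * y) = ∑ y : (ZMod p)ˣ, f y :=
  Fintype.sum_equiv (Equiv.mulLeft x) (fun y => f (x * y)) f (fun y => rfl)

lemma sum_dd_mul_left (hp : p % 4 = 3) (x : (ZMod p)ˣ) :
    ∑ y : (ZMod p)ˣ, dd p (x * y) = 2 := by
  rw [sum_mul_left_reindex x (dd p), sum_dd_one hp]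

lemma sum_hh_dd (hp : p % 4 = 3) (x : (ZMod p)ˣ) :
    ∑ y : (ZMod p)ˣ, hh p y * dd p (x * y) = -2 * hh p x := by
  have h1 : ∑ y : (ZMod p)ˣ, hh p y * dd p (x * y)
      = ∑ z : (ZMod p)ˣ, hh p (x⁻¹ * z) * dd p z := by
    rw [← sum_mul_left_reindex (f := fun z => hh p (x⁻¹ * z) * dd p z) x]
    refine Finset.sum_congr rfl fun y _ => ?_
    rw [inv_mul_cancel_left]
  rw [h1]
  have h2 : ∑ z : (ZMod p)ˣ, dd p z * hh p (x⁻¹ * z)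
      = hh p (x⁻¹ * 1) + hh p (x⁻¹ * (-1)) := sum_dd hp (fun z => hh p (x⁻¹ * z))
  calc ∑ z : (ZMod p)ˣ, hh p (x⁻¹ * z) * dd p z
      = ∑ z : (ZMod p)ˣ, dd p z * hh p (x⁻¹ * z) := by
        refine Finset.sum_congr rfl fun z _ => by ring
    _ = hh p (x⁻¹ * 1) + hh p (x⁻¹ * (-1)) := h2
    _ = -2 * hh p x := by
        rw [mul_one, mul_neg_one, hh_neg, hh_inv hp]; ring

lemma sum_dd_hh (hp : p % 4 = 3) (x : (ZMod p)ˣ) :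
    ∑ y : (ZMod p)ˣ, dd p y * hh p (x * y) = 2 * hh p x := by
  rw [sum_dd hp (fun y => hh p (x * y)), mul_one, mul_neg_one, hh_neg]
  ring

lemma sum_dd_dd (hp : p % 4 = 3) (x : (ZMod p)ˣ) :
    ∑ y : (ZMod p)ˣ, dd p y * dd p (x * y) = 2 * dd p x := by
  rw [sum_dd hp (fun y => dd p (x * y)), mul_one, mul_neg_one, dd_neg]
  ring

lemma sum_W (hp : p % 4 = 3) :
    ∑ x : (ZMod p)ˣ, ∑ y : (ZMod p)ˣ, hh p y * hh p (x * y) = 0 := by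
  rw [Finset.sum_comm]
  have h : ∀ y : (ZMod p)ˣ, ∑ x : (ZMod p)ˣ, hh p y * hh p (x * y) = 0 := by
    intro y
    rw [← Finset.mul_sum]
    have : ∑ x : (ZMod p)ˣ, hh p (x * y) = 0 := by
      have := sum_mul_left_reindex (f := fun z => hh p (z * y)) y⁻¹
      calc ∑ x : (ZMod p)ˣ, hh p (x * y)
          = ∑ x : (ZMod p)ˣ, hh p (y * x) := by
            refine Finset.sum_congr rfl fun x _ => by rw [mul_comm]
        _ = 0 := sum_hh_mul_left hp y
    rw [this, mul_zero]
  exact Finset.sum_eq_zero fun y _ => h y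

lemma sum_hh_W (hp : p % 4 = 3) :
    ∑ x : (ZMod p)ˣ, hh p x * ∑ y : (ZMod p)ˣ, hh p y * hh p (x * y) = 0 := by
  have h : ∀ x : (ZMod p)ˣ, hh p x * ∑ y : (ZMod p)ˣ, hh p y * hh p (x * y)
      = ∑ y : (ZMod p)ˣ, hh p x * hh p y * hh p (x * y) := by
    intro x
    rw [Finset.mul_sum]
    exact Finset.sum_congr rfl fun y _ => by ring
  rw [Finset.sum_congr rfl fun x _ => h x]
  exact sum_T hp

lemma sum_dd_W (hp : p % 4 = 3) :
    ∑ x : (ZMod p)ˣ, dd p x * ∑ y : (ZMod p)ˣ, hh p y * hh p (x * y)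
      = 2 * ((p : ℂ) - 3) := by
  rw [sum_dd hp (fun x => ∑ y : (ZMod p)ˣ, hh p y * hh p (x * y))]
  have h1 : ∑ y : (ZMod p)ˣ, hh p y * hh p (1 * y) = (p : ℂ) - 3 := by
    calc ∑ y : (ZMod p)ˣ, hh p y * hh p (1 * y)
        = ∑ y : (ZMod p)ˣ, hh p y * hh p y := by
          refine Finset.sum_congr rfl fun y _ => by rw [one_mul]
      _ = (p : ℂ) - 3 := sum_hh_sq hp
  have h2 : ∑ y : (ZMod p)ˣ, hh p y * hh p (-1 * y) = (p : ℂ) - 3 := by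
    calc ∑ y : (ZMod p)ˣ, hh p y * hh p (-1 * y)
        = ∑ y : (ZMod p)ˣ, hh p y * hh p y := by
          refine Finset.sum_congr rfl fun y _ => by rw [neg_one_mul, hh_neg]
      _ = (p : ℂ) - 3 := sum_hh_sq hp
  rw [h1, h2]
  ring


lemma sum_hh_dd_pt : ∑ x : (ZMod p)ˣ, hh p x * dd p x = 0 :=
  Finset.sum_eq_zero fun x _ => by rw [mul_comm]; exact dd_mul_hh x

lemma sum_dd_sq (hp : p % 4 = 3) : ∑ x : (ZMod p)ˣ, dd p x * dd p x = 2 := by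
  rw [Finset.sum_congr rfl fun x _ => dd_sq x]
  exact sum_dd_one hp

lemma hq_eq (hp : p % 4 = 3) {ε : ℂ} (hε : ε * ε = 1) :
    ε * ε * (gC p * gC p) = -(p : ℂ) := by
  rw [hε, one_mul]
  have := gC_sq hp
  rwa [sq] at this

lemma inner_eval (hp : p % 4 = 3) {ε : ℂ} (hε : ε * ε = 1) (x : (ZMod p)ˣ) :
    ∑ y : (ZMod p)ˣ,
        (-1 + ε * hh p y * gC p + (p : ℂ) * dd p y)
          * (-1 - ε * hh p (x * y) * gC p + (p : ℂ) * dd p (x * y))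
      = -(3 * (p : ℂ) + 1) + (p : ℂ) * (∑ y : (ZMod p)ˣ, hh p y * hh p (x * y))
          - 4 * (p : ℂ) * ε * gC p * hh p x + 2 * (p : ℂ) ^ 2 * dd p x := by
  have hq := hq_eq hp hε
  have expand : ∀ y : (ZMod p)ˣ,
      (-1 + ε * hh p y * gC p + (p : ℂ) * dd p y)
          * (-1 - ε * hh p (x * y) * gC p + (p : ℂ) * dd p (x * y))
      = 1
        + (ε * gC p) * hh p (x * y)
        + (-(p : ℂ)) * dd p (x * y)
        + (-(ε * gC p)) * hh p y
        + (-(ε * ε * gC p * gC p)) * (hh p y * hh p (x * y))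
        + ((p : ℂ) * ε * gC p) * (hh p y * dd p (x * y))
        + (-(p : ℂ)) * dd p y
        + (-((p : ℂ) * ε * gC p)) * (dd p y * hh p (x * y))
        + ((p : ℂ) ^ 2) * (dd p y * dd p (x * y)) := by
    intro y; ring
  rw [Finset.sum_congr rfl fun y _ => expand y]
  simp only [Finset.sum_add_distrib, ← Finset.mul_sum]
  rw [sum_one', sum_hh_mul_left hp x, sum_dd_mul_left hp x, sum_hh hp,
    sum_hh_dd hp x, sum_dd_hh hp x, sum_dd_dd hp x, sum_dd_one hp]
  linear_combination (-(∑ y : (ZMod p)ˣ, hh p y * hh p (x * y))) * hq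

lemma outer_eval (hp : p % 4 = 3) {ε : ℂ} (hε : ε * ε = 1) :
    ∑ x : (ZMod p)ˣ,
        (-1 + ε * hh p x * gC p + (p : ℂ) * dd p x)
          * (-(3 * (p : ℂ) + 1) + (p : ℂ) * (∑ y : (ZMod p)ˣ, hh p y * hh p (x * y))
              - 4 * (p : ℂ) * ε * gC p * hh p x + 2 * (p : ℂ) ^ 2 * dd p x)
      = 10 * (p : ℂ) ^ 3 - 25 * (p : ℂ) ^ 2 - 4 * (p : ℂ) - 1 := by
  have hq := hq_eq hp hε
  have expand : ∀ x : (ZMod p)ˣ,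
      (-1 + ε * hh p x * gC p + (p : ℂ) * dd p x)
          * (-(3 * (p : ℂ) + 1) + (p : ℂ) * (∑ y : (ZMod p)ˣ, hh p y * hh p (x * y))
              - 4 * (p : ℂ) * ε * gC p * hh p x + 2 * (p : ℂ) ^ 2 * dd p x)
      = (3 * (p : ℂ) + 1) * 1
        + (-(p : ℂ)) * (∑ y : (ZMod p)ˣ, hh p y * hh p (x * y))
        + (4 * (p : ℂ) * ε * gC p) * hh p x
        + (-2 * (p : ℂ) ^ 2) * dd p x
        + (-(3 * (p : ℂ) + 1) * ε * gC p) * hh p x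
        + ((p : ℂ) * ε * gC p) * (hh p x * (∑ y : (ZMod p)ˣ, hh p y * hh p (x * y)))
        + (-4 * (p : ℂ) * (ε * ε * gC p * gC p)) * (hh p x * hh p x)
        + (2 * (p : ℂ) ^ 2 * ε * gC p) * (hh p x * dd p x)
        + (-(3 * (p : ℂ) + 1) * (p : ℂ)) * dd p x
        + ((p : ℂ) ^ 2) * (dd p x * (∑ y : (ZMod p)ˣ, hh p y * hh p (x * y)))
        + (-4 * (p : ℂ) ^ 2 * ε * gC p) * (dd p x * hh p x)
        + (2 * (p : ℂ) ^ 3) * (dd p x * dd p x) := by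
    intro x; ring
  rw [Finset.sum_congr rfl fun x _ => expand x]
  simp only [Finset.sum_add_distrib, ← Finset.mul_sum]
  rw [sum_one', sum_W hp, sum_hh hp, sum_dd_one hp, sum_hh_W hp, sum_hh_sq hp,
    sum_hh_dd_pt, sum_dd_W hp, sum_dd_sq hp]
  have hdh : ∑ x : (ZMod p)ˣ, dd p x * hh p x = 0 :=
    Finset.sum_eq_zero fun x _ => dd_mul_hh x
  rw [hdh]
  linear_combination (-4 * (p : ℂ) * ((p : ℂ) - 3)) * hq


lemma dd_inv (x : (ZMod p)ˣ) : dd p x⁻¹ = dd p x := by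
  rw [dd, dd]
  have : ((x⁻¹ : (ZMod p)ˣ) : ZMod p) ^ 2 = 1 ↔ (x : ZMod p) ^ 2 = 1 := by
    rw [Units.val_inv_eq_inv_val, inv_pow, inv_eq_one]
  simp only [this]

lemma factor1 (hp : p % 4 = 3) {m : ZMod p} (hm : m ≠ 0) (x : (ZMod p)ˣ) :
    Fn p m ((x : ZMod p) ^ 2 - 1)
      = -1 + φC p m * hh p x * gC p + (p : ℂ) * dd p x := by
  by_cases h : (x : ZMod p) ^ 2 = 1
  · rw [h, sub_self, Fn_zero, hh_of_sq_one h, dd, if_pos h]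
    ring
  · rw [Fn_ne_zero hp hm (sub_ne_zero.mpr h), map_mul, hh, dd, if_neg h]
    ring

lemma factor3 (hp : p % 4 = 3) {m : ZMod p} (hm : m ≠ 0) (z : (ZMod p)ˣ) :
    Fn p m (((z⁻¹ : (ZMod p)ˣ) : ZMod p) ^ 2 - 1)
      = -1 - φC p m * hh p z * gC p + (p : ℂ) * dd p z := by
  rw [factor1 hp hm z⁻¹, hh_inv hp, dd_inv]
  ring

lemma totient_cast : ((p.totient : ℂ)) = (p : ℂ) - 1 := by
  rw [Nat.totient_prime (Fact.out : p.Prime)]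
  have h1 : 1 ≤ p := (Fact.out : p.Prime).one_lt.le
  push_cast [Nat.cast_sub h1]
  ring

lemma conj_char (χ : DirichletCharacter ℂ p) (u : (ZMod p)ˣ) :
    (starRingEnd ℂ) (χ ↑u) = χ ↑(u⁻¹) := by
  have h1 : χ ↑u * χ ↑(u⁻¹) = 1 := by
    rw [← map_mul, ← Units.val_mul, mul_inv_cancel, Units.val_one, map_one]
  have hcard : 0 < Fintype.card (ZMod p)ˣ := Fintype.card_pos
  have hpow : χ ↑u ^ Fintype.card (ZMod p)ˣ = 1 := by
    rw [← map_pow, ← Units.val_pow_eq_pow_val, pow_card_eq_one, Units.val_one, map_one]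
  have hnorm : ‖χ ↑u‖ = 1 :=
    Complex.norm_eq_one_of_pow_eq_one hpow hcard.ne'
  rw [← RCLike.inv_eq_conj hnorm]
  exact inv_eq_of_mul_eq_one_right h1

lemma conj_e (x : ZMod p) :
    (starRingEnd ℂ) (ZMod.stdAddChar x) = ZMod.stdAddChar (-x) := by
  rw [ZMod.stdAddChar_apply, ZMod.stdAddChar_apply, ← Circle.coe_inv_eq_conj,
    ← AddChar.map_neg_eq_inv]


lemma exp_eq (n : ℤ) (a : ℕ) :
    Complex.exp (2 * Real.pi * Complex.I * n * (a : ℂ) ^ 2 / p)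
      = ZMod.stdAddChar ((n : ZMod p) * ((a : ZMod p)) ^ 2) := by
  have h1 : ((n * (a : ℤ) ^ 2 : ℤ) : ZMod p) = (n : ZMod p) * ((a : ZMod p)) ^ 2 := by
    push_cast; ring
  rw [← h1, ZMod.stdAddChar_coe]
  congr 1
  push_cast
  ring

lemma gaussG_eq (n : ℤ) (χ : DirichletCharacter ℂ p) :
    gaussG n p χ
      = ∑ u : (ZMod p)ˣ, χ ↑u * ZMod.stdAddChar ((n : ZMod p) * ((u : ZMod p)) ^ 2) := by
  haveI : Fact (1 < p) := ⟨(Fact.out : p.Prime).one_lt⟩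
  have hstep1 : gaussG n p χ
      = ∑ a ∈ Finset.Icc 1 p, (fun x : ZMod p =>
          χ x * ZMod.stdAddChar ((n : ZMod p) * x ^ 2)) ((a : ZMod p)) := by
    unfold gaussG
    exact Finset.sum_congr rfl fun a _ => by rw [exp_eq]
  set F : ZMod p → ℂ := fun x => χ x * ZMod.stdAddChar ((n : ZMod p) * x ^ 2) with hF
  have hstep2 : ∑ a ∈ Finset.Icc 1 p, F ((a : ZMod p)) = ∑ x : ZMod p, F x := by
    refine Finset.sum_nbij' (fun a : ℕ => ((a : ZMod p)))
      (fun x : ZMod p => if x = 0 then p else x.val) ?_ ?_ ?_ ?_ ?_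
    · intro a _; exact Finset.mem_univ _
    · intro x _
      by_cases hx : x = 0
      · simp only [hx, if_pos rfl]
        exact Finset.mem_Icc.mpr ⟨(Fact.out : p.Prime).one_lt.le, le_rfl⟩
      · simp only [if_neg hx]
        refine Finset.mem_Icc.mpr ⟨?_, (ZMod.val_lt x).le⟩
        exact Nat.one_le_iff_ne_zero.mpr fun h => hx ((ZMod.val_eq_zero x).mp h)
    · intro a ha
      rcases Finset.mem_Icc.mp ha with ⟨h1, h2⟩
      by_cases hap : a = p
      · simp [hap, ZMod.natCast_self]
      · have hlt : a < p := lt_of_le_of_ne h2 hap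
        have hne : ((a : ZMod p)) ≠ 0 := by
          rw [Ne, ZMod.natCast_eq_zero_iff]
          intro hdvd
          have := Nat.le_of_dvd (Nat.pos_of_ne_zero (by omega)) hdvd
          omega
        rw [if_neg hne, ZMod.val_natCast_of_lt hlt]
    · intro x _
      by_cases hx : x = 0
      · simp [hx, ZMod.natCast_self]
      · rw [if_neg hx, ZMod.natCast_zmod_val]
    · intro a _; rfl
  have hstep3 : ∑ x : ZMod p, F x = ∑ u : (ZMod p)ˣ, F ↑u := by
    refine (sum_units_of_zero ?_).symm
    rw [hF]
    simp only [MulChar.map_zero, zero_mul]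
  rw [hstep1, hstep2, hstep3]


lemma gaussG_conj (n : ℤ) (χ : DirichletCharacter ℂ p) :
    (starRingEnd ℂ) (gaussG n p χ)
      = ∑ u : (ZMod p)ˣ, χ ↑u⁻¹ * ZMod.stdAddChar (-((n : ZMod p) * ((u : ZMod p)) ^ 2)) := by
  rw [gaussG_eq, map_sum]
  exact Finset.sum_congr rfl fun u _ => by rw [map_mul, conj_char, conj_e]

lemma sum_cube (f : (ZMod p)ˣ → ℂ) :
    (∑ u : (ZMod p)ˣ, f u) ^ 3
      = ∑ a : (ZMod p)ˣ, ∑ b : (ZMod p)ˣ, ∑ c : (ZMod p)ˣ, f a * f b * f c := by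
  calc (∑ u : (ZMod p)ˣ, f u) ^ 3
      = ((∑ u : (ZMod p)ˣ, f u) * (∑ u : (ZMod p)ˣ, f u)) * (∑ u : (ZMod p)ˣ, f u) := by ring
    _ = (∑ a : (ZMod p)ˣ, ∑ b : (ZMod p)ˣ, f a * f b) * (∑ u : (ZMod p)ˣ, f u) := by
        rw [Finset.sum_mul_sum]
    _ = ∑ a : (ZMod p)ˣ, ∑ b : (ZMod p)ˣ, ∑ c : (ZMod p)ˣ, f a * f b * f c := by
        rw [Finset.sum_mul]
        refine Finset.sum_congr rfl fun a _ => ?_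
        rw [Finset.sum_mul]
        refine Finset.sum_congr rfl fun b _ => ?_
        rw [Finset.mul_sum]

lemma u_inv_eq (a b d e f : (ZMod p)ˣ) :
    (d⁻¹ * e⁻¹ * f⁻¹ * a * b)⁻¹ = (a * b)⁻¹ * (d * e * f) := by
  apply Units.ext
  simp only [Units.val_mul, Units.val_inv_eq_inv_val]
  have hd := d.ne_zero; have he := e.ne_zero; have hf := f.ne_zero
  have ha := a.ne_zero; have hb := b.ne_zero
  field_simp

lemma u_cond (a b c d e f : (ZMod p)ˣ) :
    d⁻¹ * e⁻¹ * f⁻¹ * a * b * c = 1 ↔ c = (a * b)⁻¹ * (d * e * f) := by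
  rw [mul_comm _ c, mul_eq_one_iff_eq_inv, u_inv_eq]

lemma u_c0 (d e f x y : (ZMod p)ˣ) :
    (d * x * (e * y))⁻¹ * (d * e * f) = f * (x * y)⁻¹ := by
  apply Units.ext
  simp only [Units.val_mul, Units.val_inv_eq_inv_val]
  have hd := d.ne_zero; have he := e.ne_zero; have hf := f.ne_zero
  have hx := x.ne_zero; have hy := y.ne_zero
  field_simp

lemma pair_eq (m : ZMod p) (u v : (ZMod p)ˣ) :
    ZMod.stdAddChar (-(m * ((u : ZMod p)) ^ 2))
        * ZMod.stdAddChar (m * (((u * v : (ZMod p)ˣ) : ZMod p)) ^ 2)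
      = ZMod.stdAddChar (m * (((v : ZMod p)) ^ 2 - 1) * ((u : ZMod p)) ^ 2) := by
  rw [← AddChar.map_add_eq_mul]
  congr 1
  rw [Units.val_mul]
  ring

lemma chi_expand (χ : DirichletCharacter ℂ p) (E E' : (ZMod p)ˣ → ℂ) :
    (∑ u : (ZMod p)ˣ, χ ↑u⁻¹ * E' u) ^ 3 * (∑ u : (ZMod p)ˣ, χ ↑u * E u) ^ 3
      = ∑ d : (ZMod p)ˣ, ∑ e : (ZMod p)ˣ, ∑ f : (ZMod p)ˣ, ∑ a : (ZMod p)ˣ,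
          ∑ b : (ZMod p)ˣ, ∑ c : (ZMod p)ˣ,
            χ ↑(d⁻¹ * e⁻¹ * f⁻¹ * a * b * c)
              * (E' d * E' e * E' f * (E a * (E b * E c))) := by
  rw [sum_cube (fun u => χ ↑u⁻¹ * E' u), sum_cube (fun u => χ ↑u * E u), Finset.sum_mul]
  refine Finset.sum_congr rfl fun d _ => ?_
  rw [Finset.sum_mul]
  refine Finset.sum_congr rfl fun e _ => ?_
  rw [Finset.sum_mul]
  refine Finset.sum_congr rfl fun f _ => ?_
  rw [Finset.mul_sum]
  refine Finset.sum_congr rfl fun a _ => ?_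
  rw [Finset.mul_sum]
  refine Finset.sum_congr rfl fun b _ => ?_
  rw [Finset.mul_sum]
  refine Finset.sum_congr rfl fun c _ => ?_
  have hmul : ∀ u v : (ZMod p)ˣ, χ ↑(u * v) = χ ↑u * χ ↑v := fun u v => by
    rw [Units.val_mul, map_mul]
  rw [hmul, hmul, hmul, hmul, hmul]
  ring


lemma swap6 {α : Type*} [Fintype α]
    (X : DirichletCharacter ℂ p → α → α → α → α → α → α → ℂ) :
    (∑ χ : DirichletCharacter ℂ p, ∑ d : α, ∑ e : α, ∑ f : α, ∑ a : α, ∑ b : α, ∑ c : α,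
        X χ d e f a b c)
      = ∑ d : α, ∑ e : α, ∑ f : α, ∑ a : α, ∑ b : α, ∑ c : α,
          ∑ χ : DirichletCharacter ℂ p, X χ d e f a b c := by
  rw [Finset.sum_comm]
  refine Finset.sum_congr rfl fun d _ => ?_
  rw [Finset.sum_comm]
  refine Finset.sum_congr rfl fun e _ => ?_
  rw [Finset.sum_comm]
  refine Finset.sum_congr rfl fun f _ => ?_
  rw [Finset.sum_comm]
  refine Finset.sum_congr rfl fun a _ => ?_
  rw [Finset.sum_comm]
  refine Finset.sum_congr rfl fun b _ => ?_
  rw [Finset.sum_comm]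

lemma reorder5 {α : Type*} [Fintype α] (X : α → α → α → α → α → ℂ) :
    (∑ d : α, ∑ e : α, ∑ f : α, ∑ x : α, ∑ y : α, X d e f x y)
      = ∑ x : α, ∑ y : α, ∑ d : α, ∑ e : α, ∑ f : α, X d e f x y := by
  calc (∑ d : α, ∑ e : α, ∑ f : α, ∑ x : α, ∑ y : α, X d e f x y)
      = ∑ d : α, ∑ e : α, ∑ x : α, ∑ f : α, ∑ y : α, X d e f x y := by
        refine Finset.sum_congr rfl fun d _ => ?_
        refine Finset.sum_congr rfl fun e _ => ?_
        exact Finset.sum_comm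
    _ = ∑ d : α, ∑ x : α, ∑ e : α, ∑ f : α, ∑ y : α, X d e f x y := by
        refine Finset.sum_congr rfl fun d _ => ?_
        exact Finset.sum_comm
    _ = ∑ x : α, ∑ d : α, ∑ e : α, ∑ f : α, ∑ y : α, X d e f x y := Finset.sum_comm
    _ = ∑ x : α, ∑ d : α, ∑ e : α, ∑ y : α, ∑ f : α, X d e f x y := by
        refine Finset.sum_congr rfl fun x _ => ?_
        refine Finset.sum_congr rfl fun d _ => ?_
        refine Finset.sum_congr rfl fun e _ => ?_
        exact Finset.sum_comm
    _ = ∑ x : α, ∑ d : α, ∑ y : α, ∑ e : α, ∑ f : α, X d e f x y := by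
        refine Finset.sum_congr rfl fun x _ => ?_
        refine Finset.sum_congr rfl fun d _ => ?_
        exact Finset.sum_comm
    _ = ∑ x : α, ∑ y : α, ∑ d : α, ∑ e : α, ∑ f : α, X d e f x y := by
        refine Finset.sum_congr rfl fun x _ => ?_
        exact Finset.sum_comm

lemma collapse_c (R : (ZMod p)ˣ → ℂ) (a b d e f : (ZMod p)ˣ) :
    (∑ c : (ZMod p)ˣ, ∑ χ : DirichletCharacter ℂ p,
        χ ↑(d⁻¹ * e⁻¹ * f⁻¹ * a * b * c) * R c)
      = ((p : ℂ) - 1) * R ((a * b)⁻¹ * (d * e * f)) := by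
  classical
  have hc : ∀ c : (ZMod p)ˣ,
      (∑ χ : DirichletCharacter ℂ p, χ ↑(d⁻¹ * e⁻¹ * f⁻¹ * a * b * c) * R c)
        = if c = (a * b)⁻¹ * (d * e * f) then ((p : ℂ) - 1) * R c else 0 := by
    intro c
    rw [← Finset.sum_mul, DirichletCharacter.sum_characters_eq]
    by_cases h : c = (a * b)⁻¹ * (d * e * f)
    · rw [if_pos, if_pos h, totient_cast]
      rw [(u_cond a b c d e f).mpr h, Units.val_one]
    · rw [if_neg, if_neg h, zero_mul]
      intro hv
      exact h ((u_cond a b c d e f).mp (Units.val_eq_one.mp hv))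
  rw [Finset.sum_congr rfl fun c _ => hc c]
  simp


theorem statement_6' (hp : p % 4 = 3) (n : ℤ) (hn : Int.gcd n p = 1) :
    (∑ χ : DirichletCharacter ℂ p, ‖gaussG n p χ‖ ^ 6)
      = ((p : ℝ) - 1) * (10 * (p : ℝ) ^ 3 - 25 * (p : ℝ) ^ 2 - 4 * (p : ℝ) - 1) := by
  classical
  have hm : ((n : ZMod p)) ≠ 0 := by
    rw [Ne, ZMod.intCast_zmod_eq_zero_iff_dvd]
    intro hdvd
    have h1 : (p : ℤ) ∣ (Int.gcd n p : ℤ) := Int.dvd_coe_gcd hdvd dvd_rfl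
    rw [hn] at h1
    have h2 := Int.le_of_dvd one_pos h1
    have h3 := (Fact.out : p.Prime).two_le
    omega
  set m : ZMod p := ((n : ZMod p)) with hmdef
  have hε : φC p m * φC p m = 1 := by
    have := φC_sq_one hp hm; rwa [sq] at this
  have h6 : ∀ z : ℂ, ((‖z‖ ^ 6 : ℝ) : ℂ) = ((starRingEnd ℂ) z) ^ 3 * z ^ 3 := by
    intro z
    have h1 : ‖z‖ ^ 6 = Complex.normSq z ^ 3 := by
      rw [← Complex.sq_norm]; ring
    rw [h1]
    push_cast
    rw [← Complex.mul_conj]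
    ring
  have step1 : ∑ χ : DirichletCharacter ℂ p, (((‖gaussG n p χ‖) ^ 6 : ℝ) : ℂ)
      = ∑ χ : DirichletCharacter ℂ p, ∑ d : (ZMod p)ˣ, ∑ e : (ZMod p)ˣ, ∑ f : (ZMod p)ˣ, ∑ a : (ZMod p)ˣ, ∑ b : (ZMod p)ˣ, ∑ c : (ZMod p)ˣ, χ ↑(d⁻¹ * e⁻¹ * f⁻¹ * a * b * c) * (ZMod.stdAddChar (-(m * ((((d) : (ZMod p)ˣ) : ZMod p)) ^ 2)) * ZMod.stdAddChar (-(m * ((((e) : (ZMod p)ˣ) : ZMod p)) ^ 2)) * ZMod.stdAddChar (-(m * ((((f) : (ZMod p)ˣ) : ZMod p)) ^ 2)) * (ZMod.stdAddChar (m * ((((a) : (ZMod p)ˣ) : ZMod p)) ^ 2) * (ZMod.stdAddChar (m * ((((b) : (ZMod p)ˣ) : ZMod p)) ^ 2) * ZMod.stdAddChar (m * ((((c) : (ZMod p)ˣ) : ZMod p)) ^ 2)))) := by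
    refine Finset.sum_congr rfl fun χ _ => ?_
    rw [h6, gaussG_conj n χ, gaussG_eq n χ]
    exact chi_expand χ (fun u => ZMod.stdAddChar (m * ((((u) : (ZMod p)ˣ) : ZMod p)) ^ 2)) (fun u => ZMod.stdAddChar (-(m * ((((u) : (ZMod p)ˣ) : ZMod p)) ^ 2)))
  have step2 : (∑ χ : DirichletCharacter ℂ p, ∑ d : (ZMod p)ˣ, ∑ e : (ZMod p)ˣ, ∑ f : (ZMod p)ˣ, ∑ a : (ZMod p)ˣ, ∑ b : (ZMod p)ˣ, ∑ c : (ZMod p)ˣ, χ ↑(d⁻¹ * e⁻¹ * f⁻¹ * a * b * c) * (ZMod.stdAddChar (-(m * ((((d) : (ZMod p)ˣ) : ZMod p)) ^ 2)) * ZMod.stdAddChar (-(m * ((((e) : (ZMod p)ˣ) : ZMod p)) ^ 2)) * ZMod.stdAddChar (-(m * ((((f) : (ZMod p)ˣ) : ZMod p)) ^ 2)) * (ZMod.stdAddChar (m * ((((a) : (ZMod p)ˣ) : ZMod p)) ^ 2) * (ZMod.stdAddChar (m * ((((b) : (ZMod p)ˣ) : ZMod p)) ^ 2) * ZMod.stdAddChar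 (m * ((((c) : (ZMod p)ˣ) : ZMod p)) ^ 2))))) = ∑ d : (ZMod p)ˣ, ∑ e : (ZMod p)ˣ, ∑ f : (ZMod p)ˣ, ∑ a : (ZMod p)ˣ, ∑ b : (ZMod p)ˣ, ∑ c : (ZMod p)ˣ, ∑ χ : DirichletCharacter ℂ p, χ ↑(d⁻¹ * e⁻¹ * f⁻¹ * a * b * c) * (ZMod.stdAddChar (-(m * ((((d) : (ZMod p)ˣ) : ZMod p)) ^ 2)) * ZMod.stdAddChar (-(m * ((((e) : (ZMod p)ˣ) : ZMod p)) ^ 2)) * ZMod.stdAddChar (-(m * ((((f) : (ZMod p)ˣ) : ZMod p)) ^ 2)) * (ZMod.stdAddChar (m * ((((a) : (ZMod p)ˣ) : ZMod p)) ^ 2) * (ZMod.stdAddChar (m * ((((b) : (ZMod p)ˣ) : ZMod p)) ^ 2) * ZMod.stdAddChar (m * ((((c) : (ZMod p)ˣ) : ZMod p)) ^ 2)))) :=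
    swap6 _
  have step3 : (∑ d : (ZMod p)ˣ, ∑ e : (ZMod p)ˣ, ∑ f : (ZMod p)ˣ, ∑ a : (ZMod p)ˣ, ∑ b : (ZMod p)ˣ, ∑ c : (ZMod p)ˣ, ∑ χ : DirichletCharacter ℂ p, χ ↑(d⁻¹ * e⁻¹ * f⁻¹ * a * b * c) * (ZMod.stdAddChar (-(m * ((((d) : (ZMod p)ˣ) : ZMod p)) ^ 2)) * ZMod.stdAddChar (-(m * ((((e) : (ZMod p)ˣ) : ZMod p)) ^ 2)) * ZMod.stdAddChar (-(m * ((((f) : (ZMod p)ˣ) : ZMod p)) ^ 2)) * (ZMod.stdAddChar (m * ((((a) : (ZMod p)ˣ) : ZMod p)) ^ 2) * (ZMod.stdAddChar (m * ((((b) : (ZMod p)ˣ) : ZMod p)) ^ 2) * ZMod.stdAddChar (m * ((((c) : (ZMod p)ˣ) : ZMod p)) ^ 2))))) = ∑ d : (ZMod p)ˣ, ∑ e : (ZMod p)ˣ, ∑ f : (ZMod p)ˣ, ∑ a : (ZMod p)ˣ, ∑ b : (ZMod p)ˣ, ((p : ℂ) - 1) * (ZMod.stdAddChar (-(m * ((((d)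 : (ZMod p)ˣ) : ZMod p)) ^ 2)) * ZMod.stdAddChar (-(m * ((((e) : (ZMod p)ˣ) : ZMod p)) ^ 2)) * ZMod.stdAddChar (-(m * ((((f) : (ZMod p)ˣ) : ZMod p)) ^ 2)) * (ZMod.stdAddChar (m * ((((a) : (ZMod p)ˣ) : ZMod p)) ^ 2) * (ZMod.stdAddChar (m * ((((b) : (ZMod p)ˣ) : ZMod p)) ^ 2) * ZMod.stdAddChar (m * (((((a * b)⁻¹ * (d * e * f)) : (ZMod p)ˣ) : ZMod p)) ^ 2)))) := by
    refine Finset.sum_congr rfl fun d _ => ?_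
    refine Finset.sum_congr rfl fun e _ => ?_
    refine Finset.sum_congr rfl fun f _ => ?_
    refine Finset.sum_congr rfl fun a _ => ?_
    refine Finset.sum_congr rfl fun b _ => ?_
    exact collapse_c (fun c => ZMod.stdAddChar (-(m * ((((d) : (ZMod p)ˣ) : ZMod p)) ^ 2)) * ZMod.stdAddChar (-(m * ((((e) : (ZMod p)ˣ) : ZMod p)) ^ 2)) * ZMod.stdAddChar (-(m * ((((f) : (ZMod p)ˣ) : ZMod p)) ^ 2)) * (ZMod.stdAddChar (m * ((((a) : (ZMod p)ˣ) : ZMod p)) ^ 2) * (ZMod.stdAddChar (m * ((((b) : (ZMod p)ˣ) : ZMod p)) ^ 2) * ZMod.stdAddChar (m * ((((c) : (ZMod p)ˣ) : ZMod p)) ^ 2)))) a b d e f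
  have step4 : (∑ d : (ZMod p)ˣ, ∑ e : (ZMod p)ˣ, ∑ f : (ZMod p)ˣ, ∑ a : (ZMod p)ˣ, ∑ b : (ZMod p)ˣ, ((p : ℂ) - 1) * (ZMod.stdAddChar (-(m * ((((d) : (ZMod p)ˣ) : ZMod p)) ^ 2)) * ZMod.stdAddChar (-(m * ((((e) : (ZMod p)ˣ) : ZMod p)) ^ 2)) * ZMod.stdAddChar (-(m * ((((f) : (ZMod p)ˣ) : ZMod p)) ^ 2)) * (ZMod.stdAddChar (m * ((((a) : (ZMod p)ˣ) : ZMod p)) ^ 2) * (ZMod.stdAddChar (m * ((((b) : (ZMod p)ˣ) : ZMod p)) ^ 2) * ZMod.stdAddChar (m * (((((a * b)⁻¹ * (d * e * f)) : (ZMod p)ˣ) : ZMod p)) ^ 2))))) = ∑ d : (ZMod p)ˣ, ∑ e : (ZMod p)ˣ, ∑ f : (ZMod p)ˣ, ∑ x : (ZMod p)ˣ, ∑ y : (ZMod p)ˣ, ((p : ℂ) - 1) * (ZMod.stdAddChar (-(m * ((((d) : (ZMod p)ˣ) : ZMod p)) ^ 2)) * ZMod.stdAddChar (-(m * ((((e)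 : (ZMod p)ˣ) : ZMod p)) ^ 2)) * ZMod.stdAddChar (-(m * ((((f) : (ZMod p)ˣ) : ZMod p)) ^ 2)) * (ZMod.stdAddChar (m * ((((d * x) : (ZMod p)ˣ) : ZMod p)) ^ 2) * (ZMod.stdAddChar (m * ((((e * y) : (ZMod p)ˣ) : ZMod p)) ^ 2) * ZMod.stdAddChar (m * (((((d * x * (e * y))⁻¹ * (d * e * f)) : (ZMod p)ˣ) : ZMod p)) ^ 2)))) := by
    refine Finset.sum_congr rfl fun d _ => ?_
    refine Finset.sum_congr rfl fun e _ => ?_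
    refine Finset.sum_congr rfl fun f _ => ?_
    have ha := (sum_mul_left_reindex (p := p) d
      (fun a => ∑ b : (ZMod p)ˣ, ((p : ℂ) - 1) * (ZMod.stdAddChar (-(m * ((((d) : (ZMod p)ˣ) : ZMod p)) ^ 2)) * ZMod.stdAddChar (-(m * ((((e) : (ZMod p)ˣ) : ZMod p)) ^ 2)) * ZMod.stdAddChar (-(m * ((((f) : (ZMod p)ˣ) : ZMod p)) ^ 2)) * (ZMod.stdAddChar (m * ((((a) : (ZMod p)ˣ) : ZMod p)) ^ 2) * (ZMod.stdAddChar (m * ((((b) : (ZMod p)ˣ) : ZMod p)) ^ 2) * ZMod.stdAddChar (m * (((((a * b)⁻¹ * (d * e * f)) : (ZMod p)ˣ) : ZMod p)) ^ 2)))))).symm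
    rw [ha]
    refine Finset.sum_congr rfl fun x _ => ?_
    exact (sum_mul_left_reindex (p := p) e
      (fun b => ((p : ℂ) - 1) * (ZMod.stdAddChar (-(m * ((((d) : (ZMod p)ˣ) : ZMod p)) ^ 2)) * ZMod.stdAddChar (-(m * ((((e) : (ZMod p)ˣ) : ZMod p)) ^ 2)) * ZMod.stdAddChar (-(m * ((((f) : (ZMod p)ˣ) : ZMod p)) ^ 2)) * (ZMod.stdAddChar (m * ((((d * x) : (ZMod p)ˣ) : ZMod p)) ^ 2) * (ZMod.stdAddChar (m * ((((b) : (ZMod p)ˣ) : ZMod p)) ^ 2) * ZMod.stdAddChar (m * (((((d * x * b)⁻¹ * (d * e * f)) : (ZMod p)ˣ) : ZMod p)) ^ 2)))))).symm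
  have step5 : (∑ d : (ZMod p)ˣ, ∑ e : (ZMod p)ˣ, ∑ f : (ZMod p)ˣ, ∑ x : (ZMod p)ˣ, ∑ y : (ZMod p)ˣ, ((p : ℂ) - 1) * (ZMod.stdAddChar (-(m * ((((d) : (ZMod p)ˣ) : ZMod p)) ^ 2)) * ZMod.stdAddChar (-(m * ((((e) : (ZMod p)ˣ) : ZMod p)) ^ 2)) * ZMod.stdAddChar (-(m * ((((f) : (ZMod p)ˣ) : ZMod p)) ^ 2)) * (ZMod.stdAddChar (m * ((((d * x) : (ZMod p)ˣ) : ZMod p)) ^ 2) * (ZMod.stdAddChar (m * ((((e * y) : (ZMod p)ˣ) : ZMod p)) ^ 2) * ZMod.stdAddChar (m * (((((d * x * (e * y))⁻¹ * (d * e * f)) : (ZMod p)ˣ) : ZMod p)) ^ 2))))) = ∑ d : (ZMod p)ˣ, ∑ e : (ZMod p)ˣ, ∑ f : (ZMod p)ˣ, ∑ x : (ZMod p)ˣ, ∑ y : (ZMod p)ˣ, ((p : ℂ) - 1) * (ZMod.stdAddChar (m * (((((x) : (ZMod p)ˣ) : ZMod p)) ^ 2 - 1) * ((((d) : (ZMod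 p)ˣ) : ZMod p)) ^ 2) * (ZMod.stdAddChar (m * (((((y) : (ZMod p)ˣ) : ZMod p)) ^ 2 - 1) * ((((e) : (ZMod p)ˣ) : ZMod p)) ^ 2) * ZMod.stdAddChar (m * ((((((x * y)⁻¹) : (ZMod p)ˣ) : ZMod p)) ^ 2 - 1) * ((((f) : (ZMod p)ˣ) : ZMod p)) ^ 2))) := by
    refine Finset.sum_congr rfl fun d _ => ?_
    refine Finset.sum_congr rfl fun e _ => ?_
    refine Finset.sum_congr rfl fun f _ => ?_
    refine Finset.sum_congr rfl fun x _ => ?_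
    refine Finset.sum_congr rfl fun y _ => ?_
    rw [u_c0 d e f x y]
    congr 1
    calc ZMod.stdAddChar (-(m * ((((d) : (ZMod p)ˣ) : ZMod p)) ^ 2)) * ZMod.stdAddChar (-(m * ((((e) : (ZMod p)ˣ) : ZMod p)) ^ 2)) * ZMod.stdAddChar (-(m * ((((f) : (ZMod p)ˣ) : ZMod p)) ^ 2)) * (ZMod.stdAddChar (m * ((((d * x) : (ZMod p)ˣ) : ZMod p)) ^ 2) * (ZMod.stdAddChar (m * ((((e * y) : (ZMod p)ˣ) : ZMod p)) ^ 2) * ZMod.stdAddChar (m * ((((f * (x * y)⁻¹) : (ZMod p)ˣ) : ZMod p)) ^ 2)))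
        = (ZMod.stdAddChar (-(m * ((((d) : (ZMod p)ˣ) : ZMod p)) ^ 2)) * ZMod.stdAddChar (m * ((((d * x) : (ZMod p)ˣ) : ZMod p)) ^ 2)) * ((ZMod.stdAddChar (-(m * ((((e) : (ZMod p)ˣ) : ZMod p)) ^ 2)) * ZMod.stdAddChar (m * ((((e * y) : (ZMod p)ˣ) : ZMod p)) ^ 2)) * (ZMod.stdAddChar (-(m * ((((f) : (ZMod p)ˣ) : ZMod p)) ^ 2)) * ZMod.stdAddChar (m * ((((f * (x * y)⁻¹) : (ZMod p)ˣ) : ZMod p)) ^ 2))) := by ring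
      _ = ZMod.stdAddChar (m * (((((x) : (ZMod p)ˣ) : ZMod p)) ^ 2 - 1) * ((((d) : (ZMod p)ˣ) : ZMod p)) ^ 2) * (ZMod.stdAddChar (m * (((((y) : (ZMod p)ˣ) : ZMod p)) ^ 2 - 1) * ((((e) : (ZMod p)ˣ) : ZMod p)) ^ 2) * ZMod.stdAddChar (m * ((((((x * y)⁻¹) : (ZMod p)ˣ) : ZMod p)) ^ 2 - 1) * ((((f) : (ZMod p)ˣ) : ZMod p)) ^ 2)) := by rw [pair_eq m d x, pair_eq m e y, pair_eq m f (x * y)⁻¹]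
  have step6 : (∑ d : (ZMod p)ˣ, ∑ e : (ZMod p)ˣ, ∑ f : (ZMod p)ˣ, ∑ x : (ZMod p)ˣ, ∑ y : (ZMod p)ˣ, ((p : ℂ) - 1) * (ZMod.stdAddChar (m * (((((x) : (ZMod p)ˣ) : ZMod p)) ^ 2 - 1) * ((((d) : (ZMod p)ˣ) : ZMod p)) ^ 2) * (ZMod.stdAddChar (m * (((((y) : (ZMod p)ˣ) : ZMod p)) ^ 2 - 1) * ((((e) : (ZMod p)ˣ) : ZMod p)) ^ 2) * ZMod.stdAddChar (m * ((((((x * y)⁻¹) : (ZMod p)ˣ) : ZMod p)) ^ 2 - 1) * ((((f) : (ZMod p)ˣ) : ZMod p)) ^ 2)))) = ∑ x : (ZMod p)ˣ, ∑ y : (ZMod p)ˣ, ∑ d : (ZMod p)ˣ, ∑ e : (ZMod p)ˣ, ∑ f : (ZMod p)ˣ, ((p : ℂ) - 1) * (ZMod.stdAddChar (m * (((((x) : (ZMod p)ˣ) : ZMod p)) ^ 2 - 1) * ((((d) : (ZMod p)ˣ) : ZMod p)) ^ 2) * (ZMod.stdAddChar (m * (((((y) : (ZMod p)ˣ) : ZMod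 p)) ^ 2 - 1) * ((((e) : (ZMod p)ˣ) : ZMod p)) ^ 2) * ZMod.stdAddChar (m * ((((((x * y)⁻¹) : (ZMod p)ˣ) : ZMod p)) ^ 2 - 1) * ((((f) : (ZMod p)ˣ) : ZMod p)) ^ 2))) := reorder5 _
  have step7 : (∑ x : (ZMod p)ˣ, ∑ y : (ZMod p)ˣ, ∑ d : (ZMod p)ˣ, ∑ e : (ZMod p)ˣ, ∑ f : (ZMod p)ˣ, ((p : ℂ) - 1) * (ZMod.stdAddChar (m * (((((x) : (ZMod p)ˣ) : ZMod p)) ^ 2 - 1) * ((((d) : (ZMod p)ˣ) : ZMod p)) ^ 2) * (ZMod.stdAddChar (m * (((((y) : (ZMod p)ˣ) : ZMod p)) ^ 2 - 1) * ((((e) : (ZMod p)ˣ) : ZMod p)) ^ 2) * ZMod.stdAddChar (m * ((((((x * y)⁻¹) : (ZMod p)ˣ) : ZMod p)) ^ 2 - 1) * ((((f) : (ZMod p)ˣ) : ZMod p)) ^ 2)))) = ∑ x : (ZMod p)ˣ, ∑ y : (ZMod p)ˣ, ((p : ℂ) - 1) * (Fn p m (((x : ZMod p)) ^ 2 - 1)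 * (Fn p m (((y : ZMod p)) ^ 2 - 1) * Fn p m (((((x * y)⁻¹ : (ZMod p)ˣ) : ZMod p)) ^ 2 - 1))) := by
    refine Finset.sum_congr rfl fun x _ => ?_
    refine Finset.sum_congr rfl fun y _ => ?_
    have h1 : ∀ d e : (ZMod p)ˣ, (∑ f : (ZMod p)ˣ, ((p : ℂ) - 1) * (ZMod.stdAddChar (m * (((((x) : (ZMod p)ˣ) : ZMod p)) ^ 2 - 1) * ((((d) : (ZMod p)ˣ) : ZMod p)) ^ 2) * (ZMod.stdAddChar (m * (((((y) : (ZMod p)ˣ) : ZMod p)) ^ 2 - 1) * ((((e) : (ZMod p)ˣ) : ZMod p)) ^ 2) * ZMod.stdAddChar (m * ((((((x * y)⁻¹) : (ZMod p)ˣ) : ZMod p)) ^ 2 - 1) * ((((f) : (ZMod p)ˣ) : ZMod p)) ^ 2))))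
        = ((p : ℂ) - 1) * (ZMod.stdAddChar (m * (((((x) : (ZMod p)ˣ) : ZMod p)) ^ 2 - 1) * ((((d) : (ZMod p)ˣ) : ZMod p)) ^ 2) * (ZMod.stdAddChar (m * (((((y) : (ZMod p)ˣ) : ZMod p)) ^ 2 - 1) * ((((e) : (ZMod p)ˣ) : ZMod p)) ^ 2) * ∑ f : (ZMod p)ˣ, ZMod.stdAddChar (m * ((((((x * y)⁻¹) : (ZMod p)ˣ) : ZMod p)) ^ 2 - 1) * ((((f) : (ZMod p)ˣ) : ZMod p)) ^ 2))) := by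
      intro d e
      rw [← Finset.mul_sum, ← Finset.mul_sum, ← Finset.mul_sum]
    rw [Finset.sum_congr rfl fun d _ => Finset.sum_congr rfl fun e _ => h1 d e]
    have h2 : ∀ d : (ZMod p)ˣ, (∑ e : (ZMod p)ˣ, ((p : ℂ) - 1) * (ZMod.stdAddChar (m * (((((x) : (ZMod p)ˣ) : ZMod p)) ^ 2 - 1) * ((((d) : (ZMod p)ˣ) : ZMod p)) ^ 2) * (ZMod.stdAddChar (m * (((((y) : (ZMod p)ˣ) : ZMod p)) ^ 2 - 1) * ((((e) : (ZMod p)ˣ) : ZMod p)) ^ 2) * ∑ f : (ZMod p)ˣ, ZMod.stdAddChar (m * ((((((x * y)⁻¹) : (ZMod p)ˣ) : ZMod p)) ^ 2 - 1) * ((((f) : (ZMod p)ˣ) : ZMod p)) ^ 2))))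
        = ((p : ℂ) - 1) * (ZMod.stdAddChar (m * (((((x) : (ZMod p)ˣ) : ZMod p)) ^ 2 - 1) * ((((d) : (ZMod p)ˣ) : ZMod p)) ^ 2) * ((∑ e : (ZMod p)ˣ, ZMod.stdAddChar (m * (((((y) : (ZMod p)ˣ) : ZMod p)) ^ 2 - 1) * ((((e) : (ZMod p)ˣ) : ZMod p)) ^ 2)) * ∑ f : (ZMod p)ˣ, ZMod.stdAddChar (m * ((((((x * y)⁻¹) : (ZMod p)ˣ) : ZMod p)) ^ 2 - 1) * ((((f) : (ZMod p)ˣ) : ZMod p)) ^ 2))) := by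
      intro d
      rw [← Finset.mul_sum, ← Finset.mul_sum, ← Finset.sum_mul]
    rw [Finset.sum_congr rfl fun d _ => h2 d]
    rw [← Finset.mul_sum, ← Finset.sum_mul]
    rfl
  have step8 : (∑ x : (ZMod p)ˣ, ∑ y : (ZMod p)ˣ, ((p : ℂ) - 1) * (Fn p m (((x : ZMod p)) ^ 2 - 1) * (Fn p m (((y : ZMod p)) ^ 2 - 1) * Fn p m (((((x * y)⁻¹ : (ZMod p)ˣ) : ZMod p)) ^ 2 - 1)))) = ∑ x : (ZMod p)ˣ, ∑ y : (ZMod p)ˣ, ((p : ℂ) - 1) * ((-1 + φC p m * hh p x * gC p + (p : ℂ) * dd p x) * ((-1 + φC p m * hh p y * gC p + (p : ℂ) * dd p y) * (-1 - φC p m * hh p (x * y) * gC p + (p : ℂ) * dd p (x * y)))) := by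
    refine Finset.sum_congr rfl fun x _ => ?_
    refine Finset.sum_congr rfl fun y _ => ?_
    rw [show Fn p m (((x : ZMod p)) ^ 2 - 1) = (-1 + φC p m * hh p x * gC p + (p : ℂ) * dd p x) from factor1 hp hm x,
      show Fn p m (((y : ZMod p)) ^ 2 - 1) = (-1 + φC p m * hh p y * gC p + (p : ℂ) * dd p y) from factor1 hp hm y,
      show Fn p m (((((x * y)⁻¹ : (ZMod p)ˣ) : ZMod p)) ^ 2 - 1) = (-1 - φC p m * hh p (x * y) * gC p + (p : ℂ) * dd p (x * y)) from factor3 hp hm (x * y)]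
  have step9 : (∑ x : (ZMod p)ˣ, ∑ y : (ZMod p)ˣ, ((p : ℂ) - 1) * ((-1 + φC p m * hh p x * gC p + (p : ℂ) * dd p x) * ((-1 + φC p m * hh p y * gC p + (p : ℂ) * dd p y) * (-1 - φC p m * hh p (x * y) * gC p + (p : ℂ) * dd p (x * y)))))
      = ((p : ℂ) - 1) * (10 * (p : ℂ) ^ 3 - 25 * (p : ℂ) ^ 2 - 4 * (p : ℂ) - 1) := by
    have hx : ∀ x : (ZMod p)ˣ, (∑ y : (ZMod p)ˣ, ((p : ℂ) - 1) * ((-1 + φC p m * hh p x * gC p + (p : ℂ) * dd p x) * ((-1 + φC p m * hh p y * gC p + (p : ℂ) * dd p y) * (-1 - φC p m * hh p (x * y) * gC p + (p : ℂ) * dd p (x * y)))))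
        = ((p : ℂ) - 1) * ((-1 + φC p m * hh p x * gC p + (p : ℂ) * dd p x) * (-(3 * (p : ℂ) + 1)
            + (p : ℂ) * (∑ y : (ZMod p)ˣ, hh p y * hh p (x * y))
            - 4 * (p : ℂ) * (φC p m) * gC p * hh p x + 2 * (p : ℂ) ^ 2 * dd p x)) := by
      intro x
      rw [← Finset.mul_sum, ← Finset.mul_sum, inner_eval hp hε x]
    rw [Finset.sum_congr rfl fun x _ => hx x, ← Finset.mul_sum, outer_eval hp hε]
  have main : ∑ χ : DirichletCharacter ℂ p, (((‖gaussG n p χ‖) ^ 6 : ℝ) : ℂ)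
      = ((p : ℂ) - 1) * (10 * (p : ℂ) ^ 3 - 25 * (p : ℂ) ^ 2 - 4 * (p : ℂ) - 1) :=
    ((((((((step1.trans step2).trans step3).trans step4).trans step5).trans step6).trans
      step7).trans step8).trans step9)
  have final : ((∑ χ : DirichletCharacter ℂ p, ‖gaussG n p χ‖ ^ 6 : ℝ) : ℂ)
      = ((((p : ℝ) - 1) * (10 * (p : ℝ) ^ 3 - 25 * (p : ℝ) ^ 2 - 4 * (p : ℝ) - 1) : ℝ) : ℂ) := by
    rw [Complex.ofReal_sum]
    rw [main]
    push_cast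
    ring
  exact_mod_cast final

end S6

/-- For every prime `p ≡ 3 (mod 4)` and every integer `n` coprime to `p`,
`Σ_{χ mod p} |G(n,χ;p)|⁶ = (p−1)(10p³ − 25p² − 4p − 1)`. -/
theorem statement_6 (p : ℕ) [Fact p.Prime] (hp : p % 4 = 3)
    (n : ℤ) (hn : Int.gcd n p = 1) :
    (∑ χ : DirichletCharacter ℂ p, ‖gaussG n p χ‖ ^ 6)
      = ((p : ℝ) - 1) * (10 * (p : ℝ) ^ 3 - 25 * (p : ℝ) ^ 2 - 4 * (p : ℝ) - 1) :=
  S6.statement_6' hp n hn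
end

section
/- Let p be an odd prime and let χ be a non-principal even Dirichlet character modulo p (i.e., χ ≠ χ₀ and χ(−1) = 1). Then for every integer n with gcd(n,p) = 1, one has the identity |G(n,χ;p)|² = 2p + (n/p)·G(1;p)·Σ_{a=1}^{p-1} χ(a)·((a²−1)/p), where G(1;p) = Σ_{a=1}^{p} e^{2πi·a²/p}. -/
open Finset ZMod Complex

/-- Reindex a sum over `Icc 1 p` as a sum over `ZMod p`. -/
lemma sum_Icc_eq_sum_zmod (p : ℕ) [NeZero p] (f : ZMod p → ℂ) :
    ∑ a ∈ Finset.Icc 1 p, f (a : ZMod p) = ∑ x : ZMod p, f x := by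
  refine Finset.sum_nbij' (fun a => (a : ZMod p))
    (fun x => if x = 0 then p else x.val) ?_ ?_ ?_ ?_ ?_
  · intro a _; exact Finset.mem_univ _
  · intro x _
    split_ifs with h
    · exact Finset.mem_Icc.mpr ⟨NeZero.one_le, le_rfl⟩
    · refine Finset.mem_Icc.mpr ⟨Nat.one_le_iff_ne_zero.mpr ?_, (ZMod.val_lt x).le⟩
      simpa [ZMod.val_eq_zero] using h
  · intro a ha
    obtain ⟨h1, h2⟩ := Finset.mem_Icc.mp ha
    rcases eq_or_lt_of_le h2 with rfl | hlt
    · simp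
    · have : (a : ZMod p) ≠ 0 := by
        rw [Ne, ZMod.natCast_eq_zero_iff]
        intro hdvd
        exact absurd (Nat.le_of_dvd (Nat.lt_of_lt_of_le Nat.zero_lt_one h1) hdvd) (not_le.mpr hlt)
      simp [this, ZMod.val_cast_of_lt hlt]
  · intro x _
    split_ifs with h
    · simp [h]
    · simp [ZMod.natCast_val, ZMod.cast_id]
  · intro a _; rfl

section Aux

variable (p : ℕ) [Fact p.Prime]

local notation "ψ" => ZMod.stdAddChar (N := p)
local notation "Q" => quadraticChar (ZMod p)

lemma psi_sum_zero {m : ZMod p} (hm : m ≠ 0) : ∑ t : ZMod p, ψ (m * t) = 0 := by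
  have h1 : AddChar.mulShift ψ m ≠ 1 := ZMod.isPrimitive_stdAddChar p hm
  have h0 : AddChar.mulShift ψ m ≠ 0 := h1
  simpa [AddChar.mulShift_apply] using (AddChar.sum_eq_zero_iff_ne_zero.mpr h0)

lemma counting (hp : p ≠ 2) (m : ZMod p) :
    ∑ y : ZMod p, ψ (m * y ^ 2) = ∑ t : ZMod p, (1 + (Q t : ℂ)) * ψ (m * t) := by
  have key : ∀ t : ZMod p, (1 + (Q t : ℂ))
      = ((Finset.univ.filter fun y : ZMod p => y ^ 2 = t).card : ℂ) := by
    intro t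
    have h := quadraticChar_card_sqrts ((ZMod.ringChar_zmod_n p).substr hp) t
    rw [Set.toFinset_setOf] at h
    have h2 : (((Finset.univ.filter fun y : ZMod p => y ^ 2 = t).card : ℤ) : ℂ)
        = ((Q t : ℤ) : ℂ) + 1 := by exact_mod_cast congrArg (Int.cast : ℤ → ℂ) h
    push_cast at h2 ⊢
    linear_combination -h2
  calc ∑ y : ZMod p, ψ (m * y ^ 2)
      = ∑ t : ZMod p, ∑ y ∈ Finset.univ.filter fun y : ZMod p => y ^ 2 = t,
          ψ (m * y ^ 2) := (Finset.sum_fiberwise _ _ _).symm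
    _ = ∑ t : ZMod p, ∑ _y ∈ Finset.univ.filter fun y : ZMod p => y ^ 2 = t,
          ψ (m * t) := by
        refine Finset.sum_congr rfl fun t _ => Finset.sum_congr rfl fun y hy => ?_
        rw [(Finset.mem_filter.mp hy).2]
    _ = ∑ t : ZMod p, (1 + (Q t : ℂ)) * ψ (m * t) := by
        refine Finset.sum_congr rfl fun t _ => ?_
        rw [Finset.sum_const, key t, nsmul_eq_mul]

lemma gauss_twist {m : ZMod p} (hm : m ≠ 0) :
    ∑ t : ZMod p, (Q t : ℂ) * ψ (m * t)
      = (Q m : ℂ) * gaussSum ((quadraticChar (ZMod p)).ringHomComp (Int.castRingHom ℂ)) ψ := by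
  set QC := (quadraticChar (ZMod p)).ringHomComp (Int.castRingHom ℂ) with hQC
  have hu : IsUnit m := isUnit_iff_ne_zero.mpr hm
  have h := gaussSum_mulShift QC ψ hu.unit
  have h1 : gaussSum QC (AddChar.mulShift ψ hu.unit) = ∑ t : ZMod p, (Q t : ℂ) * ψ (m * t) := by
    unfold gaussSum
    refine Finset.sum_congr rfl fun t _ => ?_
    simp [hQC, MulChar.ringHomComp, hu.unit_spec]
  have hQm : (QC m) * (QC m) = 1 := by
    have : (Q m) * (Q m) = 1 := by
      have := quadraticChar_sq_one hm
      rwa [sq] at this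
    simp only [hQC, MulChar.ringHomComp_apply, eq_intCast]
    exact_mod_cast congrArg (Int.cast : ℤ → ℂ) this
  have hQu : QC (hu.unit : ZMod p) = QC m := by rw [hu.unit_spec]
  rw [h1, hQu] at h
  have hQm' : (QC m : ℂ) = (Q m : ℂ) := by simp [hQC]
  calc ∑ t : ZMod p, (Q t : ℂ) * ψ (m * t)
      = (QC m * QC m) * (∑ t : ZMod p, (Q t : ℂ) * ψ (m * t)) := by rw [hQm, one_mul]
    _ = QC m * (QC m * ∑ t : ZMod p, (Q t : ℂ) * ψ (m * t)) := by ring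
    _ = (Q m : ℂ) * gaussSum QC ψ := by rw [h, hQm']

lemma T_m (hp : p ≠ 2) {m : ZMod p} (hm : m ≠ 0) :
    ∑ y : ZMod p, ψ (m * y ^ 2)
      = (Q m : ℂ) * gaussSum ((quadraticChar (ZMod p)).ringHomComp (Int.castRingHom ℂ)) ψ := by
  rw [counting p hp m]
  have : ∑ t : ZMod p, (1 + (Q t : ℂ)) * ψ (m * t)
      = (∑ t : ZMod p, ψ (m * t)) + ∑ t : ZMod p, (Q t : ℂ) * ψ (m * t) := by
    rw [← Finset.sum_add_distrib]
    exact Finset.sum_congr rfl fun t _ => by ring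
  rw [this, psi_sum_zero p hm, zero_add, gauss_twist p hm]

lemma T_one (hp : p ≠ 2) :
    ∑ y : ZMod p, ψ ((y : ZMod p) ^ 2)
      = gaussSum ((quadraticChar (ZMod p)).ringHomComp (Int.castRingHom ℂ)) ψ := by
  have h1 : (1 : ZMod p) ≠ 0 := one_ne_zero
  have := T_m p hp h1
  simp only [one_mul] at this
  rw [this]
  simp

lemma conj_psi (a : ZMod p) : (starRingEnd ℂ) (ψ a) = ψ (-a) := by
  have h1 : ‖ψ a‖ = 1 := by
    rw [ZMod.stdAddChar_apply]
    exact Circle.norm_coe _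
  rw [AddChar.map_neg_eq_inv, Complex.inv_eq_conj h1]

lemma conj_chi (χ : DirichletCharacter ℂ p) {x : ZMod p} (hx : x ≠ 0) :
    (starRingEnd ℂ) (χ x) * χ x = 1 := by
  have hu : IsUnit x := isUnit_iff_ne_zero.mpr hx
  have h1 : ‖χ x‖ = 1 := by
    have := χ.unit_norm_eq_one hu.unit
    rwa [hu.unit_spec] at this
  rw [mul_comm, Complex.mul_conj, Complex.normSq_eq_norm_sq]
  rw [h1]
  norm_num

lemma gaussG_eq (χ : DirichletCharacter ℂ p) (n : ℤ) :
    gaussG n p χ = ∑ x : ZMod p, χ x * ψ ((n : ZMod p) * x ^ 2) := by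
  rw [gaussG, ← sum_Icc_eq_sum_zmod p (fun x => χ x * ψ ((n : ZMod p) * x ^ 2))]
  refine Finset.sum_congr rfl fun a _ => ?_
  congr 1
  have hc : ((n * (a : ℤ) ^ 2 : ℤ) : ZMod p) = (n : ZMod p) * (a : ZMod p) ^ 2 := by
    push_cast; ring
  rw [← hc, ZMod.stdAddChar_coe]
  congr 1
  push_cast; ring

lemma centerSum_eq :
    (∑ a ∈ Finset.Icc 1 p, Complex.exp (2 * Real.pi * Complex.I * (a : ℂ) ^ 2 / p))
      = ∑ x : ZMod p, ψ (x ^ 2) := by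
  rw [← sum_Icc_eq_sum_zmod p (fun x => ψ (x ^ 2))]
  refine Finset.sum_congr rfl fun a _ => ?_
  have hc : (((a : ℤ) ^ 2 : ℤ) : ZMod p) = (a : ZMod p) ^ 2 := by push_cast; ring
  rw [← hc, ZMod.stdAddChar_coe]
  congr 1
  push_cast; ring

lemma thirdSum_eq (χ : DirichletCharacter ℂ p) :
    (∑ a ∈ Finset.Icc 1 (p - 1), χ a * (legendreSym p ((a : ℤ) ^ 2 - 1) : ℂ))
      = ∑ x : ZMod p, χ x * ((Q (x ^ 2 - 1) : ℤ) : ℂ) := by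
  have hp1 : p - 1 + 1 = p := Nat.succ_pred_eq_of_pos (Fact.out : p.Prime).pos
  have key : ∀ a : ℕ, χ a * (legendreSym p ((a : ℤ) ^ 2 - 1) : ℂ)
      = χ (a : ZMod p) * ((Q ((a : ZMod p) ^ 2 - 1) : ℤ) : ℂ) := by
    intro a
    congr 2
    rw [legendreSym]
    congr 1
    push_cast; ring
  have hzero : χ ((p : ZMod p)) * ((Q (((p : ZMod p)) ^ 2 - 1) : ℤ) : ℂ) = 0 := by
    rw [ZMod.natCast_self]
    have : ¬ IsUnit (0 : ZMod p) := by
      simp [isUnit_zero_iff]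
    rw [χ.map_nonunit this, zero_mul]
  calc (∑ a ∈ Finset.Icc 1 (p - 1), χ a * (legendreSym p ((a : ℤ) ^ 2 - 1) : ℂ))
      = ∑ a ∈ Finset.Icc 1 (p - 1), χ (a : ZMod p) * ((Q ((a : ZMod p) ^ 2 - 1) : ℤ) : ℂ) :=
        Finset.sum_congr rfl fun a _ => key a
    _ = ∑ a ∈ Finset.Icc 1 p, χ (a : ZMod p) * ((Q ((a : ZMod p) ^ 2 - 1) : ℤ) : ℂ) := by
        have hsum := Finset.sum_Icc_succ_top (a := 1) (b := p - 1) (by omega)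
          (fun a : ℕ => χ (a : ZMod p) * ((Q ((a : ZMod p) ^ 2 - 1) : ℤ) : ℂ))
        rw [hp1] at hsum
        rw [hsum, hzero, add_zero]
    _ = ∑ x : ZMod p, χ x * ((Q (x ^ 2 - 1) : ℤ) : ℂ) :=
        sum_Icc_eq_sum_zmod p (fun x => χ x * ((Q (x ^ 2 - 1) : ℤ) : ℂ))

end Aux

/-- For an odd prime `p`, a non-principal even character `χ` mod `p`, and an
integer `n` coprime to `p`, one has
`|G(n,χ;p)|² = 2p + (n/p)·G(1;p)·Σ_{a=1}^{p-1} χ(a)·((a²−1)/p)`, where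
`G(1;p) = Σ_{a=1}^{p} e^{2πi·a²/p}`. -/
theorem statement_18 (p : ℕ) [Fact p.Prime] (hp : p ≠ 2)
    (χ : DirichletCharacter ℂ p) (hχ : χ ≠ 1) (hχeven : χ (-1) = 1)
    (n : ℤ) (hn : Int.gcd n p = 1) :
    ((‖gaussG n p χ‖) ^ 2 : ℂ)
      = 2 * (p : ℂ) + (legendreSym p n : ℂ)
          * (∑ a ∈ Finset.Icc 1 p, Complex.exp (2 * Real.pi * Complex.I * (a : ℂ) ^ 2 / p))
          * ∑ a ∈ Finset.Icc 1 (p - 1), χ a * (legendreSym p ((a : ℤ) ^ 2 - 1) : ℂ) := by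
  have hp2 : 2 < p := lt_of_le_of_ne (Fact.out : p.Prime).two_le (Ne.symm hp)
  set N : ZMod p := (n : ZMod p) with hN
  have hNne : N ≠ 0 := by
    rw [hN, Ne, ZMod.intCast_zmod_eq_zero_iff_dvd]
    intro hdvd
    have : (p : ℤ) ∣ Int.gcd n p := Int.dvd_coe_gcd hdvd dvd_rfl
    rw [hn] at this
    have h3 : (p : ℤ) ≤ 1 := Int.le_of_dvd one_pos (by exact_mod_cast this)
    omega
  have hone : (1 : ZMod p) ≠ -1 := by
    intro h
    have : (2 : ZMod p) = 0 := by linear_combination h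
    rw [show ((2 : ZMod p)) = ((2 : ℕ) : ZMod p) by push_cast; ring,
      ZMod.natCast_eq_zero_iff] at this
    have := Nat.le_of_dvd (by norm_num) this
    omega
  set ψ' : AddChar (ZMod p) ℂ := ZMod.stdAddChar (N := p) with hψ'
  set QC := (quadraticChar (ZMod p)).ringHomComp (Int.castRingHom ℂ) with hQC
  set g := gaussSum QC ψ' with hg
  set T : ZMod p → ℂ := fun m => ∑ y : ZMod p, ψ' (m * y ^ 2) with hT
  -- left side
  have hG := gaussG_eq p χ n
  have hLHS : ((‖gaussG n p χ‖) ^ 2 : ℂ)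
      = gaussG n p χ * (starRingEnd ℂ) (gaussG n p χ) := by
    rw [← Complex.ofReal_pow, Complex.sq_norm, Complex.mul_conj]
  have hconjG : (starRingEnd ℂ) (gaussG n p χ)
      = ∑ y : ZMod p, (starRingEnd ℂ) (χ y) * ψ' (-(N * y ^ 2)) := by
    rw [hG, map_sum]
    refine Finset.sum_congr rfl fun y _ => ?_
    rw [map_mul, conj_psi]
  -- expand the double sum
  have hdouble : gaussG n p χ * (starRingEnd ℂ) (gaussG n p χ)
      = ∑ y : ZMod p, ∑ x : ZMod p,
          ((starRingEnd ℂ) (χ y) * ψ' (-(N * y ^ 2))) * (χ x * ψ' (N * x ^ 2)) := by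
    rw [hconjG, hG, mul_comm, Finset.sum_mul_sum]
  -- inner sum for y ≠ 0
  have hinner : ∀ y : ZMod p, y ≠ 0 →
      ∑ x : ZMod p, ((starRingEnd ℂ) (χ y) * ψ' (-(N * y ^ 2))) * (χ x * ψ' (N * x ^ 2))
        = ∑ c : ZMod p, χ c * ψ' (N * (c ^ 2 - 1) * y ^ 2) := by
    intro y hy
    have hyu : IsUnit y := isUnit_iff_ne_zero.mpr hy
    rw [← Equiv.sum_comp (Equiv.mulLeft₀ y hy)
      (fun x => ((starRingEnd ℂ) (χ y) * ψ' (-(N * y ^ 2))) * (χ x * ψ' (N * x ^ 2)))]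
    · refine Finset.sum_congr rfl fun c _ => ?_
      simp only [Equiv.mulLeft₀, Equiv.coe_fn_mk]
      have hsplit : χ (y * c) = χ y * χ c := map_mul χ y c
      have hψm : ψ' (-(N * y ^ 2)) * ψ' (N * (y * c) ^ 2) = ψ' (N * (c ^ 2 - 1) * y ^ 2) := by
        rw [← AddChar.map_add_eq_mul]
        congr 1
        ring
      calc ((starRingEnd ℂ) (χ y) * ψ' (-(N * y ^ 2))) * (χ (y * c) * ψ' (N * (y * c) ^ 2))
          = ((starRingEnd ℂ) (χ y) * χ y) * χ c
            * (ψ' (-(N * y ^ 2)) * ψ' (N * (y * c) ^ 2)) := by rw [hsplit]; ring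
        _ = χ c * ψ' (N * (c ^ 2 - 1) * y ^ 2) := by
            rw [conj_chi p χ hy, hψm, one_mul]
  -- inner sum at y = 0 vanishes
  have hzero : ∑ x : ZMod p, ((starRingEnd ℂ) (χ (0 : ZMod p)) * ψ' (-(N * (0:ZMod p) ^ 2)))
      * (χ x * ψ' (N * x ^ 2)) = 0 := by
    have hχ0 : χ (0 : ZMod p) = 0 := by
      refine χ.map_nonunit ?_
      simp [isUnit_zero_iff]
    simp [hχ0]
  have hstep1 : gaussG n p χ * (starRingEnd ℂ) (gaussG n p χ)
      = ∑ c : ZMod p, χ c * (T (N * (c ^ 2 - 1)) - 1) := by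
    rw [hdouble,
      Finset.sum_eq_sum_sdiff_singleton_add (Finset.mem_univ (0 : ZMod p)), hzero, add_zero]
    calc ∑ y ∈ Finset.univ \ {0}, ∑ x : ZMod p,
          ((starRingEnd ℂ) (χ y) * ψ' (-(N * y ^ 2))) * (χ x * ψ' (N * x ^ 2))
        = ∑ y ∈ Finset.univ \ {0}, ∑ c : ZMod p, χ c * ψ' (N * (c ^ 2 - 1) * y ^ 2) := by
          refine Finset.sum_congr rfl fun y hy => ?_
          exact hinner y (by simpa using (Finset.mem_sdiff.mp hy).2)
      _ = ∑ c : ZMod p, ∑ y ∈ Finset.univ \ {0}, χ c * ψ' (N * (c ^ 2 - 1) * y ^ 2) :=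
          Finset.sum_comm
      _ = ∑ c : ZMod p, χ c * (T (N * (c ^ 2 - 1)) - 1) := by
          refine Finset.sum_congr rfl fun c _ => ?_
          rw [← Finset.mul_sum]
          congr 1
          have h2 := Finset.sum_eq_sum_sdiff_singleton_add (Finset.mem_univ (0 : ZMod p))
            (fun y => ψ' (N * (c ^ 2 - 1) * y ^ 2))
          have h3 : ψ' (N * (c ^ 2 - 1) * (0 : ZMod p) ^ 2) = 1 := by
            rw [show N * (c ^ 2 - 1) * (0 : ZMod p) ^ 2 = 0 by ring, AddChar.map_zero_eq_one]
          rw [h3] at h2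
          have h4 : T (N * (c ^ 2 - 1)) = ∑ y : ZMod p, ψ' (N * (c ^ 2 - 1) * y ^ 2) := rfl
          rw [h4, h2]
          ring
  -- pointwise evaluation
  have hpt : ∀ c : ZMod p, χ c * T (N * (c ^ 2 - 1))
      = χ c * (((quadraticChar (ZMod p) N : ℤ) : ℂ)
          * ((quadraticChar (ZMod p) (c ^ 2 - 1) : ℤ) : ℂ) * g)
        + (if c = 1 then (p : ℂ) else 0) + (if c = -1 then (p : ℂ) else 0) := by
    intro c
    by_cases hc : c ^ 2 - 1 = 0
    · have hT0 : T (N * (c ^ 2 - 1)) = p := by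
        rw [hc, mul_zero, hT]
        simp only [zero_mul, AddChar.map_zero_eq_one]
        rw [Finset.sum_const, Finset.card_univ, ZMod.card, nsmul_eq_mul, mul_one]
      have hc' : c = 1 ∨ c = -1 := by
        have h5 : (c - 1) * (c + 1) = 0 := by linear_combination hc
        rcases mul_eq_zero.mp h5 with h | h
        · left; linear_combination h
        · right; linear_combination h
      have hQ0 : ((quadraticChar (ZMod p) (c ^ 2 - 1) : ℤ) : ℂ) = 0 := by
        rw [hc]; simp
      rcases hc' with rfl | rfl
      · rw [hT0, map_one, hQ0, if_pos rfl, if_neg hone]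
        ring
      · rw [hT0, hχeven, hQ0, if_neg (fun h => hone (by linear_combination -h)), if_pos rfl]
        ring
    · have hM : N * (c ^ 2 - 1) ≠ 0 := mul_ne_zero hNne hc
      have hTm := T_m p hp hM
      have hc1 : c ≠ 1 := fun h => hc (by rw [h]; ring)
      have hcm1 : c ≠ -1 := fun h => hc (by rw [h]; ring)
      have hmul : ((quadraticChar (ZMod p) (N * (c ^ 2 - 1)) : ℤ) : ℂ)
          = ((quadraticChar (ZMod p) N : ℤ) : ℂ)
            * ((quadraticChar (ZMod p) (c ^ 2 - 1) : ℤ) : ℂ) := by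
        rw [map_mul]; push_cast; ring
      rw [← hψ', ← hQC, ← hg] at hTm
      rw [hT, if_neg hc1, if_neg hcm1]
      simp only [hTm, hmul]
      ring
  -- sum the pointwise identity
  have hsum2 : ∑ c : ZMod p, χ c * T (N * (c ^ 2 - 1))
      = (∑ c : ZMod p, χ c * (((quadraticChar (ZMod p) N : ℤ) : ℂ)
          * ((quadraticChar (ZMod p) (c ^ 2 - 1) : ℤ) : ℂ) * g)) + (p : ℂ) + (p : ℂ) := by
    rw [Finset.sum_congr rfl fun c _ => hpt c]
    rw [Finset.sum_add_distrib, Finset.sum_add_distrib]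
    congr 1
    · congr 1
      rw [Finset.sum_ite_eq' Finset.univ (1 : ZMod p) (fun _ => (p : ℂ))]
      simp
    · rw [Finset.sum_ite_eq' Finset.univ (-1 : ZMod p) (fun _ => (p : ℂ))]
      simp
  have hchisum : ∑ c : ZMod p, χ c = 0 := MulChar.sum_eq_zero_of_ne_one hχ
  -- assemble
  have hmain : gaussG n p χ * (starRingEnd ℂ) (gaussG n p χ)
      = 2 * (p : ℂ) + ((quadraticChar (ZMod p) N : ℤ) : ℂ) * g
          * ∑ x : ZMod p, χ x * ((quadraticChar (ZMod p) (x ^ 2 - 1) : ℤ) : ℂ) := by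
    rw [hstep1]
    have h6 : ∑ c : ZMod p, χ c * (T (N * (c ^ 2 - 1)) - 1)
        = (∑ c : ZMod p, χ c * T (N * (c ^ 2 - 1))) - ∑ c : ZMod p, χ c := by
      rw [← Finset.sum_sub_distrib]
      exact Finset.sum_congr rfl fun c _ => by ring
    rw [h6, hchisum, sub_zero, hsum2]
    have h7 : ∑ c : ZMod p, χ c * (((quadraticChar (ZMod p) N : ℤ) : ℂ)
          * ((quadraticChar (ZMod p) (c ^ 2 - 1) : ℤ) : ℂ) * g)
        = ((quadraticChar (ZMod p) N : ℤ) : ℂ) * g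
          * ∑ x : ZMod p, χ x * ((quadraticChar (ZMod p) (x ^ 2 - 1) : ℤ) : ℂ) := by
      rw [Finset.mul_sum]
      exact Finset.sum_congr rfl fun c _ => by ring
    rw [h7]
    ring
  rw [hLHS, hmain, centerSum_eq p, T_one p hp, thirdSum_eq p χ]
  have hleg : (legendreSym p n : ℂ) = ((quadraticChar (ZMod p) N : ℤ) : ℂ) := rfl
  rw [hleg, ← hψ', ← hQC, ← hg]
end
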